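/- Let 𝔤 be a nonzero finite-dimensional nilpotent real Lie algebra with a complex structure J. Then there exists a nonzero closed (1,0)-form on 𝔤, i.e. a nonzero ℝ-linear map ω : 𝔤 → ℂ such that ω(JX) = i·ω(X) for all X ∈ 𝔤 and ω([X, Y]) = 0 for all X, Y ∈ 𝔤. -/

import Mathlib

open LieModule


/-- If `𝔤` is a nonzero finite-dimensional nilpotent real Lie algebra with a complex
structure `J`, then there exists a nonzero closed `(1,0)`-form on `𝔤`: a nonzero
`ℝ`-linear map `ω : 𝔤 → ℂ` with `ω(JX) = i·ω(X)` for all `X` and `ω([X,Y]) = 0`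
for all `X, Y`. -/
theorem exists_closed_one_zero_form (g : Type*) [LieRing g] [LieAlgebra ℝ g]
    [FiniteDimensional ℝ g] [Nontrivial g] [LieRing.IsNilpotent g]
    (J : g →ₗ[ℝ] g) (hJ2 : ∀ X : g, J (J X) = -X)
    (hNij : ∀ X Y : g, ⁅J X, J Y⁆ = ⁅X, Y⁆ + J ⁅J X, Y⁆ + J ⁅X, J Y⁆) :
    ∃ ω : g →ₗ[ℝ] ℂ, ω ≠ 0 ∧ (∀ X : g, ω (J X) = Complex.I * ω X) ∧
      ∀ X Y : g, ω ⁅X, Y⁆ = 0 := by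
  set D : ℕ → Submodule ℝ g := fun k => (lowerCentralSeries ℝ g g k : Submodule ℝ g) with hDdef
  have hD : ∀ (k : ℕ) (x y : g), y ∈ D k → ⁅x, y⁆ ∈ D (k + 1) := by
    intro k x y hy
    simp only [hDdef, LieSubmodule.mem_toSubmodule, lowerCentralSeries_succ] at hy ⊢
    exact LieSubmodule.lie_mem_lie (LieSubmodule.mem_top x) hy
  have hD' : ∀ (k : ℕ) (x y : g), x ∈ D k → ⁅x, y⁆ ∈ D (k + 1) := by
    intro k x y hx
    rw [← lie_skew]
    exact (D (k + 1)).neg_mem (hD k y x hx)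
  set P : ℕ → Submodule ℝ g := fun k => D k ⊔ (D k).map J with hPdef
  have hDP : ∀ k, D k ≤ P k := fun k => le_sup_left
  have hJD : ∀ (k : ℕ) (x : g), x ∈ D k → J x ∈ P k := by
    intro k x hx
    exact le_sup_right (α := Submodule ℝ g) (a := D k) (Submodule.mem_map_of_mem hx)
  have hJP : ∀ (k : ℕ) (x : g), x ∈ P k → J x ∈ P k := by
    intro k x hx
    obtain ⟨a, ha, nb, hnb, rfl⟩ := Submodule.mem_sup.mp hx
    obtain ⟨b, hb, rfl⟩ := hnb
    rw [map_add J a (J b), hJ2]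
    exact (P k).add_mem (hJD k a ha) ((P k).neg_mem (hDP k hb))
  -- The key properness claim: `D 1 ⊔ J (D 1)` is a proper subspace.
  have hP1 : P 1 ≠ ⊤ := by
    intro htop
    have step : ∀ k : ℕ, P (k + 1) = ⊤ := by
      intro k
      induction k with
      | zero => exact htop
      | succ k ih =>
        have key : D 1 ≤ P (k + 2) := by
          have hspan : D 1 = Submodule.span ℝ {m : g | ∃ x ∈ (⊤ : LieIdeal ℝ g),
              ∃ n ∈ (⊤ : LieSubmodule ℝ g g), ⁅x, n⁆ = m} := by
            simp only [hDdef]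
            rw [show lowerCentralSeries ℝ g g 1 = ⁅(⊤ : LieIdeal ℝ g),
              lowerCentralSeries ℝ g g 0⁆ from lowerCentralSeries_succ .., LieModule.lowerCentralSeries_zero]
            exact LieSubmodule.lieIdeal_oper_eq_linear_span' ..
          rw [hspan, Submodule.span_le]
          rintro - ⟨x, -, y, -, rfl⟩
          have hx : x ∈ P (k + 1) := ih ▸ Submodule.mem_top
          have hy : y ∈ P (k + 1) := ih ▸ Submodule.mem_top
          obtain ⟨a, ha, nb, hnb, rfl⟩ := Submodule.mem_sup.mp hx
          obtain ⟨b, hb, rfl⟩ := hnb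
          obtain ⟨c, hc, nd, hnd, rfl⟩ := Submodule.mem_sup.mp hy
          obtain ⟨d, hd, rfl⟩ := hnd
          have expand : ⁅a + J b, c + J d⁆ =
              ⁅a, c⁆ + ⁅a, J d⁆ + ⁅J b, c⁆ + ⁅J b, J d⁆ := by
            rw [lie_add, add_lie, add_lie]; abel
          rw [expand, hNij b d]
          refine Submodule.add_mem _ (Submodule.add_mem _ (Submodule.add_mem _ ?_ ?_) ?_)
            (Submodule.add_mem _ (Submodule.add_mem _ ?_ ?_) ?_)
          · exact hDP _ (hD' (k + 1) a c ha)
          · exact hDP _ (hD' (k + 1) a (J d) ha)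
          · exact hDP _ (hD (k + 1) (J b) c hc)
          · exact hDP _ (hD' (k + 1) b d hb)
          · exact hJD _ _ (hD (k + 1) (J b) d hd)
          · exact hJD _ _ (hD' (k + 1) b (J d) hb)
        rw [eq_top_iff, ← htop, hPdef]
        refine sup_le key ?_
        rintro - ⟨x, hx, rfl⟩
        exact hJP _ _ (key hx)
    obtain ⟨k, hk⟩ := LieModule.IsNilpotent.nilpotent ℝ g g
    have hDk1 : D (k + 1) = ⊥ := by
      have h1 : lowerCentralSeries ℝ g g (k + 1) = ⊥ :=
        le_bot_iff.mp (hk ▸ antitone_lowerCentralSeries ℝ g g (Nat.le_succ k))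
      simp only [hDdef, h1]
      rfl
    have := step k
    rw [hPdef] at this
    simp only [hDk1, Submodule.map_bot, sup_bot_eq, bot_sup_eq] at this
    exact absurd this bot_ne_top
  -- Build the form from a functional annihilating `P 1`.
  obtain ⟨x0, hx0⟩ : ∃ x : g, x ∉ P 1 := by
    by_contra h
    push_neg at h
    exact hP1 (Submodule.eq_top_iff'.mpr h)
  have hx0' : (P 1).mkQ x0 ≠ 0 := by
    simpa [Submodule.Quotient.mk_eq_zero] using hx0
  obtain ⟨φ, hφ⟩ : ∃ φ : Module.Dual ℝ (g ⧸ P 1), φ ((P 1).mkQ x0) ≠ 0 := by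
    by_contra h
    push_neg at h
    exact hx0' ((Module.forall_dual_apply_eq_zero_iff ℝ _).mp h)
  set f : g →ₗ[ℝ] ℝ := φ ∘ₗ (P 1).mkQ with hfdef
  have hfW : ∀ x ∈ P 1, f x = 0 := by
    intro x hx
    simp [hfdef, (Submodule.Quotient.mk_eq_zero _).mpr hx]
  have hfx0 : f x0 ≠ 0 := hφ
  refine ⟨{ toFun := fun x => (f x : ℂ) - Complex.I * (f (J x) : ℂ)
            map_add' := by intro x y; push_cast [map_add]; ring
            map_smul' := by intro c x; push_cast [map_smul]; simp; ring }, ?_, ?_, ?_⟩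
  · intro h
    apply hfx0
    have := LinearMap.congr_fun h x0
    simp only [LinearMap.coe_mk, AddHom.coe_mk, LinearMap.zero_apply] at this
    have hre := congrArg Complex.re this
    simpa using hre
  · intro X
    simp only [LinearMap.coe_mk, AddHom.coe_mk, hJ2, map_neg]
    push_cast
    linear_combination (↑(f (J X)) : ℂ) * Complex.I_mul_I
  · intro X Y
    have h1 : f ⁅X, Y⁆ = 0 := hfW _ (hDP 1 (hD 0 X Y (by
      simp [hDdef, LieSubmodule.mem_toSubmodule])))
    have h2 : f (J ⁅X, Y⁆) = 0 := by
      refine hfW _ ?_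
      have hm : ⁅X, Y⁆ ∈ D 1 := hD 0 X Y (by simp [hDdef, LieSubmodule.mem_toSubmodule])
      exact hJP 1 _ (hDP 1 hm)
    simp [h1, h2]
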